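/- If f : X → X is an isometry and Σ_{n=1}^∞ D(f_n, f) < ∞, then for every n, k ∈ ℕ, D(ω^n_{n+k}, f^k) ≤ Σ_{i=1}^{k} D(f_{n+i}, f); consequently the family {ω^n_{n+k} : k ∈ ℕ} converges collectively to {f^k : k ∈ ℕ} (for every ε > 0 there exists n₀ with D(ω^n_{n+k}, f^k) < ε for all k ∈ ℕ and n ≥ n₀). No commutativity assumption is needed. -/

import Mathlib

open Filter Metric Set

noncomputable def supD {X : Type*} [MetricSpace X] (g h : X → X) : ℝ :=
  ⨆ x, dist (g x) (h x)

def omega {X : Type*} (fn : ℕ → X → X) : ℕ → X → X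
  | 0 => id
  | k + 1 => fn (k + 1) ∘ omega fn k

def omegaSeg {X : Type*} (fn : ℕ → X → X) (n : ℕ) : ℕ → X → X
  | 0 => id
  | k + 1 => fn (n + k + 1) ∘ omegaSeg fn n k

lemma supD_bdd {X : Type*} [MetricSpace X] [CompactSpace X] (g h : X → X) :
    BddAbove (Set.range fun x => dist (g x) (h x)) := by
  obtain ⟨C, hC⟩ := Metric.isBounded_iff.mp (isCompact_univ.isBounded (α := X))
  exact ⟨C, by rintro r ⟨x, rfl⟩; exact hC (mem_univ _) (mem_univ _)⟩

lemma dist_le_supD {X : Type*} [MetricSpace X] [CompactSpace X] (g h : X → X) (x : X) :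
    dist (g x) (h x) ≤ supD g h :=
  le_ciSup (supD_bdd g h) x

lemma supD_le {X : Type*} [MetricSpace X] [CompactSpace X] [Nonempty X]
    {g h : X → X} {C : ℝ} (hC : ∀ x, dist (g x) (h x) ≤ C) : supD g h ≤ C :=
  ciSup_le hC

theorem stmt9 {X : Type*} [MetricSpace X] [CompactSpace X] [Nonempty X]
    (f : X → X) (fn : ℕ → X → X)
    (hfn : ∀ n, Continuous (fn n))
    (hiso : ∀ x y : X, dist (f x) (f y) = dist x y)
    (hsum : Summable fun n => supD (fn (n + 1)) f) :
    (∀ n k : ℕ, supD (omegaSeg fn n k) (f^[k]) ≤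
        ∑ i ∈ Finset.range k, supD (fn (n + i + 1)) f) ∧
    (∀ ε > 0, ∃ n₀ : ℕ, ∀ n ≥ n₀, ∀ k : ℕ, supD (omegaSeg fn n k) (f^[k]) < ε) := by
  have key : ∀ n k : ℕ, supD (omegaSeg fn n k) (f^[k]) ≤
      ∑ i ∈ Finset.range k, supD (fn (n + i + 1)) f := by
    intro n k
    induction k with
    | zero =>
      simpa [omegaSeg] using
        supD_le (g := (id : X → X)) (h := f^[0]) (C := 0) (fun x => by simp)
    | succ k ih =>
      rw [Finset.sum_range_succ]
      refine supD_le fun x => ?_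
      have h1 : dist (omegaSeg fn n (k+1) x) (f^[k+1] x) ≤
          dist (fn (n + k + 1) (omegaSeg fn n k x)) (f (omegaSeg fn n k x)) +
          dist (f (omegaSeg fn n k x)) (f (f^[k] x)) := by
        rw [Function.iterate_succ_apply']
        exact dist_triangle _ _ _
      have h2 : dist (fn (n + k + 1) (omegaSeg fn n k x)) (f (omegaSeg fn n k x)) ≤
          supD (fn (n + k + 1)) f := dist_le_supD _ _ _
      have h3 : dist (f (omegaSeg fn n k x)) (f (f^[k] x)) ≤ supD (omegaSeg fn n k) (f^[k]) := by
        rw [hiso]; exact dist_le_supD _ _ _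
      calc dist (omegaSeg fn n (k+1) x) (f^[k+1] x)
          ≤ _ + _ := h1
        _ ≤ supD (fn (n + k + 1)) f + supD (omegaSeg fn n k) (f^[k]) := add_le_add h2 h3
        _ ≤ supD (fn (n + k + 1)) f + ∑ i ∈ Finset.range k, supD (fn (n + i + 1)) f :=
            add_le_add_right ih _
        _ = _ := by ring
  refine ⟨key, fun ε hε => ?_⟩
  set g : ℕ → ℝ := fun m => supD (fn (m + 1)) f with hg
  have hg0 : ∀ m, 0 ≤ g m := fun m => le_trans dist_nonneg (dist_le_supD _ _ (Classical.arbitrary X))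
  have htail : Tendsto (fun n => ∑' i, g (i + n)) atTop (nhds 0) :=
    tendsto_sum_nat_add g
  have hev : ∀ᶠ n in atTop, ∑' i, g (i + n) < ε := by
    have := htail.eventually (gt_mem_nhds hε)
    exact this
  obtain ⟨n₀, hn₀⟩ := eventually_atTop.mp hev
  refine ⟨n₀, fun n hn k => ?_⟩
  have hsum' : Summable fun i => g (i + n) := (summable_nat_add_iff n).mpr hsum
  calc supD (omegaSeg fn n k) (f^[k])
      ≤ ∑ i ∈ Finset.range k, supD (fn (n + i + 1)) f := key n k
    _ = ∑ i ∈ Finset.range k, g (i + n) := by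
        refine Finset.sum_congr rfl fun i _ => ?_
        simp [hg, Nat.add_comm n i]
    _ ≤ ∑' i, g (i + n) := Summable.sum_le_tsum _ (fun i _ => hg0 _) hsum'
    _ < ε := hn₀ n hn
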